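/- For the cycle graph C_j and integer n ≥ 1, the graph C_j(n) is a disjoint union of exactly l = gcd(j, n) simple loops, each of length p = lcm(j, n) = jn/l. -/

import Mathlib

/-- A directed graph: vertices, edges, source and range maps. -/
structure DirGraph where
  V : Type
  E : Type
  s : E → V
  r : E → V

namespace DirGraph

/-- `G.IsPathFrom x l` : the list of edges `l` (in walking order) forms a
path starting at the vertex `x`. -/
def IsPathFrom (G : DirGraph) : G.V → List G.E → Prop
  | _, [] => True
  | x, e :: es => G.s e = x ∧ G.IsPathFrom (G.r e) es

/-- The vertex reached after walking the edges `l` starting at `x`. -/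
def endAt (G : DirGraph) : G.V → List G.E → G.V
  | x, [] => x
  | _, e :: es => G.endAt (G.r e) es

/-- A finite path in `G`: a source vertex together with a composable list of
edges (in walking order).  Vertices are the paths with no edges. -/
structure Path (G : DirGraph) where
  src : G.V
  edges : List G.E
  valid : G.IsPathFrom src edges

namespace Path

variable {G : DirGraph}

/-- The range (final vertex) of a path. -/
def rng (p : G.Path) : G.V := G.endAt p.src p.edges

/-- The length of a path. -/
def length (p : G.Path) : ℕ := p.edges.length

/-- The trivial path at a vertex. -/
def nil (x : G.V) : G.Path := ⟨x, [], trivial⟩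

end Path

variable {G : DirGraph}

theorem isPathFrom_append :
    ∀ (l₁ l₂ : List G.E) (x : G.V), G.IsPathFrom x l₁ →
      G.IsPathFrom (G.endAt x l₁) l₂ → G.IsPathFrom x (l₁ ++ l₂)
  | [], _, _, _, h₂ => h₂
  | e :: es, l₂, _, h₁, h₂ => ⟨h₁.1, isPathFrom_append es l₂ (G.r e) h₁.2 h₂⟩

theorem endAt_append :
    ∀ (l₁ l₂ : List G.E) (x : G.V), G.endAt x (l₁ ++ l₂) = G.endAt (G.endAt x l₁) l₂
  | [], _, _ => rfl
  | e :: es, l₂, x => endAt_append es l₂ (G.r e)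

theorem isPathFrom_take_drop :
    ∀ (l : List G.E) (k : ℕ) (x : G.V), G.IsPathFrom x l →
      G.IsPathFrom (G.endAt x (l.take k)) (l.drop k)
  | [], k, _, h => by cases k <;> exact h
  | _ :: _, 0, _, h => h
  | e :: es, k + 1, x, h => isPathFrom_take_drop es k (G.r e) h.2

/-- Extend a path by one more edge at its end (`p.cons e` is the path `e·p`). -/
def Path.cons (p : G.Path) (e : G.E) (h : G.s e = p.rng) : G.Path :=
  ⟨p.src, p.edges ++ [e], isPathFrom_append p.edges [e] p.src p.valid ⟨h, trivial⟩⟩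

@[simp] theorem Path.cons_length (p : G.Path) (e : G.E) (h : G.s e = p.rng) :
    (p.cons e h).length = p.length + 1 := by
  simp [Path.cons, Path.length]

/-- The remainder `w(n)` of a path modulo `n`: the final segment of length
`|w| % n` (the part of `w` walked last). -/
def Path.rem (p : G.Path) (n : ℕ) : G.Path :=
  ⟨G.endAt p.src (p.edges.take (p.length - p.length % n)),
   p.edges.drop (p.length - p.length % n),
   isPathFrom_take_drop p.edges _ p.src p.valid⟩

theorem Path.rem_length (p : G.Path) (n : ℕ) : (p.rem n).length = p.length % n := by
  show (p.edges.drop (p.length - p.length % n)).length = _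
  rw [List.length_drop]
  exact Nat.sub_sub_self (Nat.mod_le _ _)

theorem Path.rem_rng (p : G.Path) (n : ℕ) : (p.rem n).rng = p.rng := by
  show G.endAt (G.endAt p.src (p.edges.take (p.length - p.length % n)))
      (p.edges.drop (p.length - p.length % n)) = _
  rw [← endAt_append, List.take_append_drop]
  rfl

/-- The graph `E(n)`: vertices are paths of length `< n` in `G`, edges are
pairs `(e, w)` with `s(e) = r(w)`; `s(e,w) = w` and `r(e,w) = ew` if
`|w| < n - 1`, and `r(e,w) = r(e)` if `|w| = n - 1`. -/
def graphN (G : DirGraph) (n : ℕ) : DirGraph where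
  V := {w : G.Path // w.length < n}
  E := {p : G.E × G.Path // p.2.length < n ∧ G.s p.1 = p.2.rng}
  s := fun f => ⟨f.val.2, f.prop.1⟩
  r := fun f =>
    if h : f.val.2.length + 1 < n then
      ⟨f.val.2.cons f.val.1 f.prop.2, by simpa using h⟩
    else
      ⟨Path.nil (G.r f.val.1), by
        have := f.prop.1
        simp only [Path.nil, Path.length, List.length_nil]
        omega⟩

/-- A factor map between (finite) directed graphs. -/
structure FactorMap (F E : DirGraph) where
  m0 : F.V → E.V
  m1 : F.E → E.E
  src_eq : ∀ f, E.s (m1 f) = m0 (F.s f)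
  rng_eq : ∀ f, E.r (m1 f) = m0 (F.r f)
  lift : ∀ (e' : E.E) (v : F.V), E.s e' = m0 v →
    ∃! f : F.E, m1 f = e' ∧ F.s f = v

/-- The simple loop (cycle) digraph with `j` vertices. -/
def cyc (j : ℕ) : DirGraph where
  V := ZMod j
  E := ZMod j
  s := id
  r := fun i => i + 1

end DirGraph

namespace Stmt7Aux
open DirGraph

variable {j : ℕ}

/-- The canonical edge list of a path in the cycle. -/
def canonList (x : ZMod j) (k : ℕ) : List (ZMod j) :=
  (List.range k).map (fun i : ℕ => x + (i : ZMod j))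

@[simp] theorem canonList_length (x : ZMod j) (k : ℕ) : (canonList x k).length = k := by
  simp [canonList]

theorem canonList_succ (x : ZMod j) (n : ℕ) :
    canonList x (n + 1) = x :: canonList (x + 1) n := by
  unfold canonList
  rw [List.range_succ_eq_map, List.map_cons, List.map_map]
  simp only [Nat.cast_zero, add_zero]
  congr 1
  apply List.map_congr_left
  intro i _
  simp only [Function.comp]
  push_cast
  ring

theorem edges_eq : ∀ (l : List (ZMod j)) (x : ZMod j), (cyc j).IsPathFrom x l →
    l = canonList x l.length
  | [], _, _ => rfl
  | e :: es, x, h => by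
    have he : e = x := h.1
    subst he
    have ih := edges_eq es (e + 1) h.2
    rw [List.length_cons, canonList_succ, ← ih]

theorem isPathFrom_canon : ∀ (n : ℕ) (x : ZMod j),
    (cyc j).IsPathFrom x (canonList x n)
  | 0, _ => trivial
  | n+1, x => by
    rw [canonList_succ]
    exact ⟨rfl, isPathFrom_canon n (x+1)⟩

def pathOf (j : ℕ) (x : ZMod j) (k : ℕ) : (cyc j).Path :=
  ⟨x, canonList x k, isPathFrom_canon k x⟩

@[simp] theorem pathOf_src (x : ZMod j) (k : ℕ) : (pathOf j x k).src = x := rfl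

@[simp] theorem pathOf_length (x : ZMod j) (k : ℕ) : (pathOf j x k).length = k :=
  canonList_length x k

/-- The source of a path in the cycle, as an element of `ZMod j`. -/
def vsrc (p : (cyc j).Path) : ZMod j := p.src

/-- The range of a path in the cycle, as an element of `ZMod j`. -/
def vrng (p : (cyc j).Path) : ZMod j := p.rng

theorem endAt_eq : ∀ (l : List (ZMod j)) (x : ZMod j), (cyc j).IsPathFrom x l →
    (cyc j).endAt x l = x + (l.length : ZMod j)
  | [], x, _ => by simp [DirGraph.endAt]; rfl
  | e :: es, x, h => by
    have he : e = x := h.1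
    subst he
    show (cyc j).endAt (e + 1) es = _
    refine (endAt_eq es (e + 1) h.2).trans ?_
    show (e + 1 : ZMod j) + (es.length : ZMod j) = e + ((es.length + 1 : ℕ) : ZMod j)
    push_cast
    ring

theorem rng_eq (p : (cyc j).Path) : vrng p = vsrc p + (p.length : ZMod j) :=
  endAt_eq p.edges p.src p.valid

@[simp] theorem pathOf_rng (x : ZMod j) (k : ℕ) :
    vrng (pathOf j x k) = x + (k : ZMod j) := by
  rw [rng_eq, pathOf_length]
  rfl

theorem path_eq (p q : (cyc j).Path) (h1 : vsrc p = vsrc q) (h2 : p.length = q.length) :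
    p = q := by
  obtain ⟨xs, l, hl⟩ := p
  obtain ⟨ys, m, hm⟩ := q
  dsimp [DirGraph.Path.length, vsrc] at h1 h2
  subst h1
  have : l = m := by rw [edges_eq l xs hl, edges_eq m xs hm]; exact congrArg _ h2
  subst this
  rfl

theorem cons_rng {G : DirGraph} (p : G.Path) (e : G.E) (h : G.s e = p.rng) :
    (p.cons e h).rng = G.r e := by
  show G.endAt p.src (p.edges ++ [e]) = G.r e
  rw [DirGraph.endAt_append]
  rfl

variable (j) (nn : ℕ) [NeZero j] [NeZero nn]

/-- The coordinates of a vertex of `(cyc j)(nn)`: (range, length). -/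
def eqv : (graphN (cyc j) nn).V ≃ ZMod j × ZMod nn where
  toFun v := (vrng v.val, ((v.val.length : ℕ) : ZMod nn))
  invFun p := ⟨pathOf j (p.1 - ((p.2.val : ℕ) : ZMod j)) p.2.val, by
    simpa using ZMod.val_lt p.2⟩
  left_inv v := by
    apply Subtype.ext
    dsimp only
    have hlen : (((v.val.length : ℕ) : ZMod nn)).val = v.val.length :=
      ZMod.val_natCast_of_lt v.prop
    refine path_eq _ _ ?_ ?_
    · show vrng v.val - ((((v.val.length : ℕ) : ZMod nn)).val : ZMod j) = vsrc v.val
      rw [hlen, rng_eq, add_sub_cancel_right]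
    · rw [pathOf_length, hlen]
  right_inv p := by
    dsimp only
    refine Prod.ext ?_ ?_
    · show vrng (pathOf j _ _) = p.1
      rw [pathOf_rng]
      ring
    · show (((pathOf j _ _).length : ℕ) : ZMod nn) = p.2
      rw [pathOf_length, ZMod.natCast_val, ZMod.cast_id]

/-- The unique edge with source `v`. -/
def edgeOf (v : (graphN (cyc j) nn).V) : (graphN (cyc j) nn).E :=
  ⟨(v.val.rng, v.val), v.prop, rfl⟩

theorem s_edgeOf (v : (graphN (cyc j) nn).V) :
    (graphN (cyc j) nn).s (edgeOf j nn v) = v := rfl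

theorem edge_eq (f : (graphN (cyc j) nn).E) :
    f = edgeOf j nn ((graphN (cyc j) nn).s f) := by
  apply Subtype.ext
  exact Prod.ext f.prop.2 rfl

/-- The successor permutation. -/
def sig : (graphN (cyc j) nn).V ≃ (graphN (cyc j) nn).V :=
  (eqv j nn).trans ((Equiv.addRight ((1 : ZMod j), (1 : ZMod nn))).trans (eqv j nn).symm)

theorem r_edgeOf (v : (graphN (cyc j) nn).V) :
    (graphN (cyc j) nn).r (edgeOf j nn v) = sig j nn v := by
  show _ = (eqv j nn).symm ((eqv j nn) v + ((1 : ZMod j), (1 : ZMod nn)))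
  rw [Equiv.eq_symm_apply]
  show (eqv j nn) (if h : v.val.length + 1 < nn then _ else _) = _
  by_cases h : v.val.length + 1 < nn
  · erw [dif_pos h]
    refine Prod.ext ?_ ?_
    · show vrng (v.val.cons v.val.rng rfl) = vrng v.val + 1
      exact cons_rng _ _ _
    · show (((v.val.cons v.val.rng rfl).length : ℕ) : ZMod nn)
        = ((v.val.length : ℕ) : ZMod nn) + 1
      erw [Path.cons_length]
      push_cast
      ring
  · erw [dif_neg h]
    have hL : v.val.length + 1 = nn := by have := v.prop; omega
    refine Prod.ext ?_ ?_
    · show vrng (Path.nil ((cyc j).r v.val.rng)) = vrng v.val + 1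
      rfl
    · show (((Path.nil ((cyc j).r v.val.rng)).length : ℕ) : ZMod nn)
        = ((v.val.length : ℕ) : ZMod nn) + 1
      show ((0 : ℕ) : ZMod nn) = ((v.val.length : ℕ) : ZMod nn) + 1
      have h2 : ((v.val.length : ℕ) : ZMod nn) + 1
          = ((v.val.length + 1 : ℕ) : ZMod nn) := by
        push_cast
        ring
      rw [h2, hL, ZMod.natCast_self, Nat.cast_zero]

theorem sig_iter (t : ℕ) (v : (graphN (cyc j) nn).V) :
    (⇑(sig j nn))^[t] v
      = (eqv j nn).symm ((eqv j nn) v + t • ((1 : ZMod j), (1 : ZMod nn))) := by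
  induction t with
  | zero => simp
  | succ t ih =>
    rw [Function.iterate_succ_apply', ih]
    show (eqv j nn).symm ((eqv j nn) ((eqv j nn).symm _) + _) = _
    rw [Equiv.apply_symm_apply, succ_nsmul, ← add_assoc]
    rfl

theorem sig_iter_eq_iff (t : ℕ) (v : (graphN (cyc j) nn).V) :
    (⇑(sig j nn))^[t] v = v ↔ (j ∣ t ∧ nn ∣ t) := by
  rw [sig_iter, Equiv.symm_apply_eq, add_eq_left]
  have hs : t • ((1 : ZMod j), (1 : ZMod nn)) = ((t : ZMod j), (t : ZMod nn)) := by
    rw [Prod.smul_mk, nsmul_eq_mul, nsmul_eq_mul, mul_one, mul_one]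
  rw [hs, Prod.mk_eq_zero, ZMod.natCast_eq_zero_iff,
    ZMod.natCast_eq_zero_iff]

end Stmt7Aux

open DirGraph in
/-- For the simple cycle `C_j` and `n ≥ 1`, the graph
`C_j(n)` is a disjoint union of exactly `gcd(j,n)` simple loops, each of
length `p = lcm(j,n)`: every vertex has in- and out-degree exactly `1`, the
successor permutation `σ` has every orbit of exact (minimal) period
`lcm(j,n)`, and the total number of vertices is `gcd(j,n) * lcm(j,n)`. -/
theorem stmt7 (j nn : ℕ) (hj : 0 < j) (hn : 0 < nn) :
    (∀ v : (graphN (cyc j) nn).V, ∃! f : (graphN (cyc j) nn).E, (graphN (cyc j) nn).s f = v) ∧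
    (∀ v : (graphN (cyc j) nn).V, ∃! f : (graphN (cyc j) nn).E, (graphN (cyc j) nn).r f = v) ∧
    Nat.card (graphN (cyc j) nn).V = Nat.gcd j nn * Nat.lcm j nn ∧
    ∃ σ : (graphN (cyc j) nn).V ≃ (graphN (cyc j) nn).V,
      (∀ v, ∃ f : (graphN (cyc j) nn).E,
        (graphN (cyc j) nn).s f = v ∧ (graphN (cyc j) nn).r f = σ v) ∧
      (∀ v, (⇑σ)^[Nat.lcm j nn] v = v) ∧
      (∀ v t, 0 < t → t < Nat.lcm j nn → (⇑σ)^[t] v ≠ v) := by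
  haveI : NeZero j := ⟨hj.ne'⟩
  haveI : NeZero nn := ⟨hn.ne'⟩
  open Stmt7Aux in
  refine ⟨?_, ?_, ?_, sig j nn, ?_, ?_, ?_⟩
  · intro v
    exact ⟨edgeOf j nn v, s_edgeOf j nn v, fun f hf => by rw [edge_eq j nn f, hf]⟩
  · intro v
    refine ⟨edgeOf j nn ((sig j nn).symm v), ?_, ?_⟩
    · show (graphN (cyc j) nn).r (edgeOf j nn ((sig j nn).symm v)) = v
      rw [r_edgeOf, Equiv.apply_symm_apply]
    · intro f hf
      have h1 : f = edgeOf j nn ((graphN (cyc j) nn).s f) := edge_eq j nn f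
      rw [h1, r_edgeOf] at hf
      rw [h1]
      congr 1
      exact ((Equiv.symm_apply_eq _).mpr hf.symm).symm
  · rw [Nat.card_congr (eqv j nn), Nat.card_prod, Nat.card_zmod, Nat.card_zmod,
      Nat.gcd_mul_lcm]
  · intro v
    exact ⟨edgeOf j nn v, s_edgeOf j nn v, r_edgeOf j nn v⟩
  · intro v
    exact (sig_iter_eq_iff j nn _ v).mpr ⟨Nat.dvd_lcm_left j nn, Nat.dvd_lcm_right j nn⟩
  · intro v t ht hlt hv
    obtain ⟨h1, h2⟩ := (sig_iter_eq_iff j nn t v).mp hv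
    exact absurd (Nat.le_of_dvd ht (Nat.lcm_dvd h1 h2)) (by omega)
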